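/- Let Λ = J(Q,W) be a Jacobian algebra of finite type with n vertices, let m be the maximum length and p the minimum length of a maximal green sequence for Λ. Then m + p - n is at most the number of isomorphism classes of indecomposable Λ-modules. -/

import Mathlib

variable (Λ : Type) [Ring Λ]

/-- A module is Schurian if its endomorphism ring is a division ring. -/
def Schurian (M : ModuleCat.{0} Λ) : Prop :=
  Nontrivial M ∧ ∀ f : M ⟶ M, f = 0 ∨ Function.Bijective f

/-- `X` can be inserted into the sequence `M` at position `k` preserving
forward hom-orthogonality. -/
def Insertable {m : ℕ} (M : Fin m → ModuleCat.{0} Λ) (X : ModuleCat.{0} Λ)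
    (k : ℕ) : Prop :=
  ∀ i : Fin m, ((i : ℕ) < k → ∀ f : M i ⟶ X, f = 0) ∧
    (k ≤ (i : ℕ) → ∀ f : X ⟶ M i, f = 0)

/-- A maximal forward hom-orthogonal sequence of Schurian modules:
`Hom(M_i, M_j) = 0` for `i < j`, and no Schurian module can be inserted
anywhere in the sequence preserving this property.  By the main theorem of the
paper, for a Jacobian algebra `Λ = J(Q,W)` of finite type these correspond
exactly to maximal green sequences (via dimension vectors = `c`-vectors). -/
def MaximalFHO (m : ℕ) (M : Fin m → ModuleCat.{0} Λ) : Prop :=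
  (∀ i, IsFiniteLength Λ (M i)) ∧ (∀ i, Schurian Λ (M i)) ∧
  (∀ i j : Fin m, i < j → ∀ f : M i ⟶ M j, f = 0) ∧
  ¬ ∃ X : ModuleCat.{0} Λ, IsFiniteLength Λ X ∧ Schurian Λ X ∧
      ∃ k ≤ m, Insertable Λ M X k

/-! ### Auxiliary material -/

namespace Stmt16Aux

open CategoryTheory

variable {Λ}

lemma comp_app' {A B C : ModuleCat.{0} Λ} (f : A ⟶ B) (g : B ⟶ C) (x : A) :
    (f ≫ g) x = g (f x) := rfl

lemma comp_ne_zero {A B C : ModuleCat.{0} Λ} [Nontrivial B] (f : A ⟶ B) (g : B ⟶ C)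
    (hf : Function.Surjective f) (hg : Function.Injective g) : f ≫ g ≠ 0 := by
  obtain ⟨b, hb⟩ := exists_ne (0 : B)
  obtain ⟨a, rfl⟩ := hf b
  intro h
  have h2 : (f ≫ g) a = 0 := by rw [h]; rfl
  rw [comp_app'] at h2
  exact hb (hg (by simpa using h2))

/-- An isomorphism of modules from a bijective morphism. -/
noncomputable def isoOfBij {A B : ModuleCat.{0} Λ} (f : A ⟶ B) (hf : Function.Bijective f) :
    A ≅ B :=
  (LinearEquiv.ofBijective f.hom hf).toModuleIso

lemma iso_hom_bijective {A B : ModuleCat.{0} Λ} (e : A ≅ B) : Function.Bijective e.hom := by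
  constructor
  · intro x y h
    have : (e.hom ≫ e.inv) x = (e.hom ≫ e.inv) y := by rw [comp_app', comp_app', h]
    simpa using this
  · intro b
    exact ⟨e.inv b, by rw [← comp_app' e.inv e.hom b, e.inv_hom_id]; rfl⟩

/-- The isomorphism transferred to a linear equivalence. -/
noncomputable def isoLinEquiv {A B : ModuleCat.{0} Λ} (e : A ≅ B) : A ≃ₗ[Λ] B :=
  LinearEquiv.ofBijective e.hom.hom (iso_hom_bijective e)

lemma simple_of_iso {A B : ModuleCat.{0} Λ} (e : A ≅ B) (h : IsSimpleModule Λ B) :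
    IsSimpleModule Λ A := by
  have := h
  exact IsSimpleModule.congr (isoLinEquiv e)

lemma nontrivial_of_iso {A B : ModuleCat.{0} Λ} (e : A ≅ B) (h : Nontrivial B) :
    Nontrivial A := by
  obtain ⟨x, y, hxy⟩ := h
  exact ⟨e.inv x, e.inv y, fun hc => hxy ((iso_hom_bijective e.symm).injective hc)⟩

/-- A forward hom-orthogonal sequence of Schurian modules (without maximality). -/
def FHO (ℓ : ℕ) (M : Fin ℓ → ModuleCat.{0} Λ) : Prop :=
  (∀ i, IsFiniteLength Λ (M i)) ∧ (∀ i, Schurian Λ (M i)) ∧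
  (∀ i j : Fin ℓ, i < j → ∀ f : M i ⟶ M j, f = 0)

lemma iso_hom_ne_zero {A B : ModuleCat.{0} Λ} (hA : Nontrivial A) (e : A ≅ B) : e.hom ≠ 0 := by
  obtain ⟨a, ha⟩ := exists_ne (0 : A)
  intro h
  have : e.hom a = 0 := by rw [h]; rfl
  exact ha ((iso_hom_bijective e).injective (by simpa using this))

lemma FHO.pairwise_noniso {ℓ : ℕ} {M : Fin ℓ → ModuleCat.{0} Λ} (h : FHO ℓ M)
    {i j : Fin ℓ} (hij : i ≠ j) (e : M i ≅ M j) : False := by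
  rcases lt_or_gt_of_ne hij with hlt | hgt
  · exact iso_hom_ne_zero (h.2.1 i).1 e (h.2.2 i j hlt e.hom)
  · exact iso_hom_ne_zero (nontrivial_of_iso e.symm (h.2.1 i).1) e.symm
      (h.2.2 j i hgt e.symm.hom)

lemma simple_schurian {S : ModuleCat.{0} Λ} (h : IsSimpleModule Λ S) : Schurian Λ S := by
  refine ⟨h.nontrivial, fun f => ?_⟩
  have := h
  rcases LinearMap.bijective_or_eq_zero f.hom with hb | hz
  · exact Or.inr hb
  · exact Or.inl (ModuleCat.hom_ext hz)

lemma simple_finiteLength {S : ModuleCat.{0} Λ} (h : IsSimpleModule Λ S) :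
    IsFiniteLength Λ S := by
  have := h
  rw [isFiniteLength_iff_isNoetherian_isArtinian]
  exact ⟨inferInstance, inferInstance⟩

open Classical in
/-- Every maximal FHO sequence contains every simple module up to isomorphism. -/
lemma maximal_contains_simple {ℓ : ℕ} {M : Fin ℓ → ModuleCat.{0} Λ}
    (hM : MaximalFHO Λ ℓ M) (S : ModuleCat.{0} Λ) (hS : IsSimpleModule Λ S) :
    ∃ i, Nonempty (M i ≅ S) := by
  by_contra hno
  push_neg at hno
  have hSn : Nontrivial S := hS.nontrivial
  set T : Finset (Fin ℓ) := Finset.univ.filter (fun i => ¬ ∀ f : M i ⟶ S, f = 0) with hT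
  apply hM.2.2.2
  refine ⟨S, simple_finiteLength hS, simple_schurian hS, ?_⟩
  by_cases hTe : T.Nonempty
  · set i₀ := T.min' hTe with hi₀
    refine ⟨(i₀ : ℕ), le_of_lt i₀.isLt, fun i => ⟨fun hlt f => ?_, fun hge g => ?_⟩⟩
    · by_contra hf
      have : i ∈ T := by simp [hT]; exact ⟨f, hf⟩
      have h2 := Fin.le_def.mp (T.min'_le i this)
      omega
    · by_contra hg
      have hi₀T : i₀ ∈ T := T.min'_mem hTe
      simp only [hT, Finset.mem_filter] at hi₀T
      push_neg at hi₀T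
      obtain ⟨-, f, hf⟩ := hi₀T
      have := hS
      have hfs : Function.Surjective f := LinearMap.surjective_of_ne_zero (fun h => hf (ModuleCat.hom_ext h))
      have hgi : Function.Injective g := LinearMap.injective_of_ne_zero (fun h => hg (ModuleCat.hom_ext h))
      have hcomp : f ≫ g ≠ 0 := comp_ne_zero f g hfs hgi
      rcases lt_or_eq_of_le (show (i₀ : ℕ) ≤ (i : ℕ) from hge) with hlt | heq
      · exact hcomp (hM.2.2.1 i₀ i (by exact hlt) (f ≫ g))
      · have hii : i₀ = i := Fin.ext heq
        subst hii
        rcases hM.2.1 i₀ |>.2 (f ≫ g) with hz | hb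
        · exact hcomp hz
        · have hfi : Function.Injective f := by
            intro x y hxy
            apply hb.injective
            rw [comp_app', comp_app', hxy]
          exact (hno i₀).false (isoOfBij f ⟨hfi, hfs⟩)
  · refine ⟨ℓ, le_refl _, fun i => ⟨fun _ f => ?_, fun hge g => absurd i.isLt (by omega)⟩⟩
    by_contra hf
    exact hTe ⟨i, by simp [hT]; exact ⟨f, hf⟩⟩

lemma exists_simple_quot {X : ModuleCat.{0} Λ} (hfl : IsFiniteLength Λ X)
    (hnt : Nontrivial X) :
    ∃ (Q : ModuleCat.{0} Λ), IsSimpleModule Λ Q ∧ ∃ f : X ⟶ Q, Function.Surjective f := by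
  obtain ⟨hN, hA⟩ := (isFiniteLength_iff_isNoetherian_isArtinian (R := Λ) (M := X)).mp hfl
  have hsub : Nontrivial (Submodule Λ X) := by
    obtain ⟨x, hx⟩ := exists_ne (0 : X)
    exact ⟨⊥, ⊤, fun h => hx (by
      have : x ∈ (⊤ : Submodule Λ X) := trivial
      rw [← h] at this
      simpa using this)⟩
  obtain ⟨c, hc⟩ := IsCoatomic.exists_coatom (α := Submodule Λ X)
  have hQ : IsSimpleModule Λ (X ⧸ c) := (isSimpleModule_iff_isCoatom (m := c)).mpr hc
  exact ⟨ModuleCat.of Λ (X ⧸ c), hQ, ModuleCat.ofHom c.mkQ, Submodule.mkQ_surjective c⟩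

lemma exists_simple_sub {X : ModuleCat.{0} Λ} (hfl : IsFiniteLength Λ X)
    (hnt : Nontrivial X) :
    ∃ (A : ModuleCat.{0} Λ), IsSimpleModule Λ A ∧ ∃ g : A ⟶ X, Function.Injective g := by
  obtain ⟨hN, hA⟩ := (isFiniteLength_iff_isNoetherian_isArtinian (R := Λ) (M := X)).mp hfl
  obtain ⟨a, ha⟩ := IsAtomic.exists_atom (α := Submodule Λ X)
  have hS : IsSimpleModule Λ a := (isSimpleModule_iff_isAtom (m := a)).mpr ha
  exact ⟨ModuleCat.of Λ a, hS, ModuleCat.ofHom a.subtype, Submodule.injective_subtype a⟩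

lemma FHO.reps {ℓ : ℕ} {M : Fin ℓ → ModuleCat.{0} Λ} (h : FHO ℓ M)
    {ind : Set (ModuleCat.{0} Λ)}
    (hindrep : ∀ X : ModuleCat.{0} Λ, IsFiniteLength Λ X → Schurian Λ X →
      ∃ r ∈ ind, Nonempty (X ≅ r)) :
    ∃ r : Fin ℓ → ModuleCat.{0} Λ, (∀ i, r i ∈ ind) ∧ (∀ i, Nonempty (M i ≅ r i)) ∧
      Function.Injective r := by
  choose r hr hiso using fun i => hindrep (M i) (h.1 i) (h.2.1 i)
  refine ⟨r, hr, hiso, fun i j hij => ?_⟩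
  by_contra hne
  obtain ⟨ei⟩ := hiso i
  obtain ⟨ej⟩ := hiso j
  exact h.pairwise_noniso hne (ei.trans (hij ▸ ej.symm))

lemma FHO.length_le {ℓ : ℕ} {M : Fin ℓ → ModuleCat.{0} Λ} (h : FHO ℓ M)
    {ind : Set (ModuleCat.{0} Λ)} (hfin : ind.Finite)
    (hindrep : ∀ X : ModuleCat.{0} Λ, IsFiniteLength Λ X → Schurian Λ X →
      ∃ r ∈ ind, Nonempty (X ≅ r)) :
    ℓ ≤ Nat.card ind := by
  obtain ⟨r, hr, -, hinj⟩ := h.reps hindrep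
  haveI := hfin.to_subtype
  have : Function.Injective (fun i : Fin ℓ => (⟨r i, hr i⟩ : ind)) := by
    intro i j hij
    exact hinj (by simpa using hij)
  simpa using Nat.card_le_card_of_injective _ this

lemma FHO.insert {ℓ : ℕ} {M : Fin ℓ → ModuleCat.{0} Λ} (h : FHO ℓ M)
    {X : ModuleCat.{0} Λ} (hX1 : IsFiniteLength Λ X) (hX2 : Schurian Λ X)
    {k : ℕ} (hk : k ≤ ℓ) (hins : Insertable Λ M X k) :
    ∃ M' : Fin (ℓ+1) → ModuleCat.{0} Λ, FHO (ℓ+1) M' ∧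
      ∃ e : Fin ℓ → Fin (ℓ+1), StrictMono e ∧ ∀ i, M' (e i) = M i := by
  set p : Fin (ℓ+1) := ⟨k, by omega⟩ with hp
  refine ⟨p.insertNth X M, ⟨?_, ?_, ?_⟩, p.succAbove, Fin.strictMono_succAbove p,
    fun i => Fin.insertNth_apply_succAbove (α := fun _ => ModuleCat.{0} Λ) p X M i⟩
  · intro j
    by_cases hj : j = p
    · subst hj; rw [Fin.insertNth_apply_same]; exact hX1
    · obtain ⟨i, rfl⟩ := Fin.exists_succAbove_eq hj
      rw [Fin.insertNth_apply_succAbove]; exact h.1 i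
  · intro j
    by_cases hj : j = p
    · subst hj; rw [Fin.insertNth_apply_same]; exact hX2
    · obtain ⟨i, rfl⟩ := Fin.exists_succAbove_eq hj
      rw [Fin.insertNth_apply_succAbove]; exact h.2.1 i
  · intro a b hab
    by_cases ha : a = p
    · subst ha
      have hbp : b ≠ p := ne_of_gt hab
      obtain ⟨j, rfl⟩ := Fin.exists_succAbove_eq hbp
      have hj : k ≤ (j : ℕ) := by
        have := (Fin.lt_succAbove_iff_le_castSucc p j).mp hab
        simpa [hp, Fin.le_def] using this
      rw [Fin.insertNth_apply_same, Fin.insertNth_apply_succAbove]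
      exact (hins j).2 hj
    · obtain ⟨i, rfl⟩ := Fin.exists_succAbove_eq ha
      by_cases hb : b = p
      · subst hb
        have hi : (i : ℕ) < k := by
          have := (Fin.succAbove_lt_iff_castSucc_lt p i).mp hab
          simpa [hp, Fin.lt_def] using this
        rw [Fin.insertNth_apply_succAbove, Fin.insertNth_apply_same]
        exact (hins i).1 hi
      · obtain ⟨j, rfl⟩ := Fin.exists_succAbove_eq hb
        have hij : i < j := (Fin.succAbove_lt_succAbove_iff).mp hab
        rw [Fin.insertNth_apply_succAbove, Fin.insertNth_apply_succAbove]
        exact h.2.2 i j hij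

lemma extend_to_maximal {ind : Set (ModuleCat.{0} Λ)} (hfin : ind.Finite)
    (hindrep : ∀ X : ModuleCat.{0} Λ, IsFiniteLength Λ X → Schurian Λ X →
      ∃ r ∈ ind, Nonempty (X ≅ r)) :
    ∀ (d ℓ : ℕ) (M : Fin ℓ → ModuleCat.{0} Λ), FHO ℓ M → Nat.card ind ≤ ℓ + d →
    ∃ (ℓ' : ℕ) (N : Fin ℓ' → ModuleCat.{0} Λ), MaximalFHO Λ ℓ' N ∧
      ∃ e : Fin ℓ → Fin ℓ', StrictMono e ∧ ∀ i, N (e i) = M i := by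
  intro d
  induction d with
  | zero =>
    intro ℓ M hM hb
    by_cases hmax : MaximalFHO Λ ℓ M
    · exact ⟨ℓ, M, hmax, id, strictMono_id, fun _ => rfl⟩
    · exfalso
      have hnot : ∃ X : ModuleCat.{0} Λ, IsFiniteLength Λ X ∧ Schurian Λ X ∧
          ∃ k ≤ ℓ, Insertable Λ M X k := by
        by_contra hno
        exact hmax ⟨hM.1, hM.2.1, hM.2.2, hno⟩
      obtain ⟨Y, hY1, hY2, k, hk, hins⟩ := hnot
      obtain ⟨M', hM', -⟩ := hM.insert hY1 hY2 hk hins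
      have := hM'.length_le hfin hindrep
      omega
  | succ d ih =>
    intro ℓ M hM hb
    by_cases hmax : MaximalFHO Λ ℓ M
    · exact ⟨ℓ, M, hmax, id, strictMono_id, fun _ => rfl⟩
    · have hnot : ∃ X : ModuleCat.{0} Λ, IsFiniteLength Λ X ∧ Schurian Λ X ∧
          ∃ k ≤ ℓ, Insertable Λ M X k := by
        by_contra hno
        exact hmax ⟨hM.1, hM.2.1, hM.2.2, hno⟩
      obtain ⟨Y, hY1, hY2, k, hk, hins⟩ := hnot
      obtain ⟨M', hM', e1, he1, he1M⟩ := hM.insert hY1 hY2 hk hins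
      obtain ⟨ℓ', N, hN, e2, he2, he2M⟩ := ih (ℓ+1) M' hM' (by omega)
      exact ⟨ℓ', N, hN, e2 ∘ e1, he2.comp he1, fun i => by
        simp only [Function.comp_apply, he2M, he1M]⟩

end Stmt16Aux

open CategoryTheory Stmt16Aux in
/-- Let `Λ = J(Q,W)` be a Jacobian algebra of finite
(representation) type with `n` vertices, i.e. `n` simple modules up to
isomorphism, and with `ind` a finite set of representatives of the isomorphism
classes of indecomposable modules (every Schurian module, being indecomposable,
is isomorphic to exactly one of them).  If `m` is the maximum and `p` the
minimum length of a maximal green sequence for `Λ` — equivalently, of a maximal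
forward hom-orthogonal sequence of Schurian modules — then
`m + p - n` is at most the number of isomorphism classes of indecomposable
`Λ`-modules. -/
theorem stmt_16 (n : ℕ)
    (simples : Set (ModuleCat.{0} Λ))
    (hsimp : ∀ S ∈ simples, IsSimpleModule Λ S)
    (hsimprep : ∀ S : ModuleCat.{0} Λ, IsSimpleModule Λ S →
      ∃ S' ∈ simples, Nonempty (S ≅ S'))
    (hsimpinj : ∀ S ∈ simples, ∀ S' ∈ simples, Nonempty (S ≅ S') → S = S')
    (hcard : Nat.card simples = n)
    (ind : Set (ModuleCat.{0} Λ)) (hfin : ind.Finite)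
    (hindrep : ∀ X : ModuleCat.{0} Λ, IsFiniteLength Λ X → Schurian Λ X →
      ∃ r ∈ ind, Nonempty (X ≅ r))
    (hindinj : ∀ r ∈ ind, ∀ r' ∈ ind, Nonempty (r ≅ r') → r = r')
    (m p : ℕ)
    (hm : (∃ M : Fin m → ModuleCat.{0} Λ, MaximalFHO Λ m M) ∧
      ∀ (ℓ : ℕ) (M : Fin ℓ → ModuleCat.{0} Λ), MaximalFHO Λ ℓ M → ℓ ≤ m)
    (hp : (∃ M : Fin p → ModuleCat.{0} Λ, MaximalFHO Λ p M) ∧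
      ∀ (ℓ : ℕ) (M : Fin ℓ → ModuleCat.{0} Λ), MaximalFHO Λ ℓ M → p ≤ ℓ) :
    m + p ≤ n + Nat.card ind := by
  classical
  obtain ⟨⟨M, hM⟩, -⟩ := hm
  have hMf : FHO m M := ⟨hM.1, hM.2.1, hM.2.2.1⟩
  -- positions of the simples in M
  have hposM : ∀ S ∈ simples, ∃ i, Nonempty (M i ≅ S) := fun S hS =>
    maximal_contains_simple hM S (hsimp S hS)
  choose pos hpos using fun S : simples => hposM S.1 S.2
  have pos_inj : Function.Injective pos := by
    intro S S' hSS
    obtain ⟨e⟩ := hpos S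
    obtain ⟨e'⟩ := hpos S'
    exact Subtype.ext (hsimpinj S.1 S.2 S'.1 S'.2 ⟨e.symm.trans (hSS ▸ e')⟩)
  haveI hfinS : Finite simples := Finite.of_injective pos pos_inj
  haveI : Fintype simples := Fintype.ofFinite _
  -- the finset of positions
  set P : Finset (Fin m) := Finset.image pos Finset.univ with hP
  have hPmem : ∀ i, i ∈ P ↔ ∃ S ∈ simples, Nonempty (M i ≅ S) := by
    intro i
    constructor
    · intro hi
      obtain ⟨S, -, rfl⟩ := Finset.mem_image.mp hi
      exact ⟨S.1, S.2, hpos S⟩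
    · rintro ⟨S, hS, ⟨e⟩⟩
      have : pos ⟨S, hS⟩ = i := by
        by_contra hne
        obtain ⟨e'⟩ := hpos ⟨S, hS⟩
        exact hMf.pairwise_noniso hne (e'.trans e.symm)
      exact Finset.mem_image.mpr ⟨⟨S, hS⟩, Finset.mem_univ _, this⟩
  have hPcard : P.card = n := by
    rw [hP, Finset.card_image_of_injective _ pos_inj, Finset.card_univ,
      ← Nat.card_eq_fintype_card, hcard]
  -- the reversed enumeration of the positions
  set π : Fin n → Fin m := fun t => ((P.orderIsoOfFin hPcard) t.rev : Fin m) with hπ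
  have hπanti : ∀ {t u : Fin n}, t < u → π u < π t := by
    intro t u htu
    have : u.rev < t.rev := by rw [Fin.rev_lt_rev]; exact htu
    exact (P.orderIsoOfFin hPcard).strictMono this
  have hπinj : Function.Injective π := by
    intro t u htu
    rcases lt_trichotomy t u with h | h | h
    · exact absurd htu (ne_of_gt (hπanti h))
    · exact h
    · exact absurd htu (ne_of_lt (hπanti h))
  have hπP : ∀ t, π t ∈ P := fun t => ((P.orderIsoOfFin hPcard) t.rev).2
  have hπsurj : ∀ i ∈ P, ∃ t, π t = i := by
    intro i hi
    refine ⟨((P.orderIsoOfFin hPcard).symm ⟨i, hi⟩).rev, ?_⟩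
    rw [hπ]
    simp [Fin.rev_rev]
  -- the reversed sequence of simples
  set N0 : Fin n → ModuleCat.{0} Λ := fun t => M (π t) with hN0
  have hN0simple : ∀ t, IsSimpleModule Λ (N0 t) := by
    intro t
    obtain ⟨S, hS, ⟨e⟩⟩ := (hPmem (π t)).mp (hπP t)
    exact simple_of_iso e (hsimp S hS)
  have hN0f : FHO n N0 := by
    refine ⟨fun t => hM.1 (π t), fun t => hM.2.1 (π t), fun t u htu f => ?_⟩
    by_contra hf
    have := hN0simple t
    have := hN0simple u
    have hb : Function.Bijective f := LinearMap.bijective_of_ne_zero (fun h => hf (ModuleCat.hom_ext h))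
    exact hMf.pairwise_noniso ((hπanti htu).ne') (isoOfBij f hb)
  -- extend it to a maximal sequence N
  obtain ⟨ℓ, N, hN, e, he, heM⟩ :=
    extend_to_maximal hfin hindrep (Nat.card ind) n N0 hN0f (by omega)
  have hNf : FHO ℓ N := ⟨hN.1, hN.2.1, hN.2.2.1⟩
  have hpℓ : p ≤ ℓ := hp.2 ℓ N hN
  -- the key disjointness: common entries of M and N are isomorphic to simples
  have key : ∀ (i : Fin m) (j : Fin ℓ), (M i ≅ N j) →
      ∃ S ∈ simples, Nonempty (M i ≅ S) := by
    intro i j w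
    by_contra hno
    push_neg at hno
    have hnt : Nontrivial (M i) := (hM.2.1 i).1
    obtain ⟨Q, hQ, f, hf⟩ := exists_simple_quot (hM.1 i) hnt
    obtain ⟨A, hA, g, hg⟩ := exists_simple_sub (hM.1 i) hnt
    obtain ⟨q, hqs, ⟨eq⟩⟩ := hsimprep Q hQ
    obtain ⟨s, hss, ⟨es⟩⟩ := hsimprep A hA
    haveI hqnt : Nontrivial q := (hsimp q hqs).nontrivial
    haveI hsnt : Nontrivial s := (hsimp s hss).nontrivial
    -- surjection M i ⟶ q, injection s ⟶ M i
    have hfq : Function.Surjective (f ≫ eq.hom) := by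
      intro y
      obtain ⟨z, hz⟩ := (iso_hom_bijective eq).surjective y
      obtain ⟨x, hx⟩ := hf z
      exact ⟨x, by rw [comp_app', hx, hz]⟩
    have hgs : Function.Injective (es.symm.hom ≫ g) := by
      intro x y hxy
      rw [comp_app', comp_app'] at hxy
      exact (iso_hom_bijective es.symm).injective (hg hxy)
    -- positions of q and s in M
    obtain ⟨a, ⟨ea⟩⟩ := maximal_contains_simple hM q (hsimp q hqs)
    obtain ⟨c, ⟨ec⟩⟩ := maximal_contains_simple hM s (hsimp s hss)
    have hai : a < i := by
      have hnz : (f ≫ eq.hom) ≫ ea.symm.hom ≠ 0 :=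
        comp_ne_zero (B := q) _ _ hfq (iso_hom_bijective ea.symm).injective
      have hne : a ≠ i := by
        intro h; subst h
        exact (hno q hqs).false ea
      rcases lt_or_gt_of_ne hne with h | h
      · exact h
      · exact absurd (hM.2.2.1 i a h ((f ≫ eq.hom) ≫ ea.symm.hom)) hnz
    have hic : i < c := by
      have hnz : ec.hom ≫ (es.symm.hom ≫ g) ≠ 0 :=
        comp_ne_zero (B := s) _ _ (iso_hom_bijective ec).surjective hgs
      have hne : c ≠ i := by
        intro h; subst h
        exact (hno s hss).false ec
      rcases lt_or_gt_of_ne hne with h | h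
      · exact absurd (hM.2.2.1 c i h (ec.hom ≫ (es.symm.hom ≫ g))) hnz
      · exact h
    -- positions of q and s in N
    obtain ⟨a', ⟨ea'⟩⟩ := maximal_contains_simple hN q (hsimp q hqs)
    obtain ⟨c', ⟨ec'⟩⟩ := maximal_contains_simple hN s (hsimp s hss)
    have hnoN : ∀ S ∈ simples, ¬ Nonempty (N j ≅ S) := by
      rintro S hS ⟨u⟩
      exact (hno S hS).false (w.trans u)
    have haj : a' < j := by
      have hnz : (w.inv ≫ (f ≫ eq.hom)) ≫ ea'.symm.hom ≠ 0 :=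
        comp_ne_zero (B := q) _ _
          (by
            intro y
            obtain ⟨x, hx⟩ := hfq y
            obtain ⟨z, hz⟩ := (iso_hom_bijective w.symm).surjective x
            rw [Iso.symm_hom] at hz
            exact ⟨z, by rw [comp_app', hz, hx]⟩)
          (iso_hom_bijective ea'.symm).injective
      have hne : a' ≠ j := by
        intro h; subst h
        exact hnoN q hqs ⟨ea'⟩
      rcases lt_or_gt_of_ne hne with h | h
      · exact h
      · exact absurd (hN.2.2.1 j a' h ((w.inv ≫ (f ≫ eq.hom)) ≫ ea'.symm.hom)) hnz
    have hjc : j < c' := by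
      have hnz : ec'.hom ≫ ((es.symm.hom ≫ g) ≫ w.hom) ≠ 0 :=
        comp_ne_zero (B := s) _ _ (iso_hom_bijective ec').surjective
          (by
            intro x y hxy
            rw [comp_app', comp_app'] at hxy
            exact hgs ((iso_hom_bijective w).injective hxy))
      have hne : c' ≠ j := by
        intro h; subst h
        exact hnoN s hss ⟨ec'⟩
      rcases lt_or_gt_of_ne hne with h | h
      · exact absurd (hN.2.2.1 c' j h (ec'.hom ≫ ((es.symm.hom ≫ g) ≫ w.hom))) hnz
      · exact h
    -- reversal of positions
    obtain ⟨t, ht⟩ := hπsurj a ((hPmem a).mpr ⟨q, hqs, ⟨ea⟩⟩)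
    obtain ⟨u, hu⟩ := hπsurj c ((hPmem c).mpr ⟨s, hss, ⟨ec⟩⟩)
    have hNtq : N (e t) ≅ q :=
      (eqToIso (show N (e t) = M a by rw [heM t]; show M (π t) = M a; rw [ht])).trans ea
    have hNus : N (e u) ≅ s :=
      (eqToIso (show N (e u) = M c by rw [heM u]; show M (π u) = M c; rw [hu])).trans ec
    have ha' : a' = e t := by
      by_contra hne
      exact hNf.pairwise_noniso hne (ea'.trans hNtq.symm)
    have hc' : c' = e u := by
      by_contra hne
      exact hNf.pairwise_noniso hne (ec'.trans hNus.symm)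
    -- a < c in M, hence u < t, hence e u < e t, i.e. c' < a'; contradiction
    have htu : u < t := by
      by_contra hle
      push_neg at hle
      rcases lt_or_eq_of_le hle with h | h
      · have h2 : π u < π t := hπanti h
        rw [ht, hu] at h2
        have h3 : (c : ℕ) < a := h2
        have h4 : (a : ℕ) < c := lt_trans hai hic
        omega
      · subst h
        rw [ht] at hu
        have h3 : (a : ℕ) = c := by rw [hu]
        have h4 : (a : ℕ) < c := lt_trans hai hic
        omega
    have : e u < e t := he htu
    rw [← ha', ← hc'] at this
    have h1 : (c' : ℕ) < a' := this
    have h2 : (a' : ℕ) < j := haj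
    have h3 : (j : ℕ) < c' := hjc
    omega
  -- final counting
  obtain ⟨r, hr, hriso, hrinj⟩ := hMf.reps hindrep
  obtain ⟨rN, hrN, hrNiso, hrNinj⟩ := hNf.reps hindrep
  set A : Finset (ModuleCat.{0} Λ) := Finset.image r Finset.univ with hA
  set B : Finset (ModuleCat.{0} Λ) := Finset.image rN Finset.univ with hB
  have hAcard : A.card = m := by
    rw [hA, Finset.card_image_of_injective _ hrinj, Finset.card_univ, Fintype.card_fin]
  have hBcard : B.card = ℓ := by
    rw [hB, Finset.card_image_of_injective _ hrNinj, Finset.card_univ, Fintype.card_fin]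
  set indF : Finset (ModuleCat.{0} Λ) := hfin.toFinset with hindF
  have hAsub : A ⊆ indF := by
    intro x hx
    obtain ⟨i, -, rfl⟩ := Finset.mem_image.mp hx
    exact hfin.mem_toFinset.mpr (hr i)
  have hBsub : B ⊆ indF := by
    intro x hx
    obtain ⟨j, -, rfl⟩ := Finset.mem_image.mp hx
    exact hfin.mem_toFinset.mpr (hrN j)
  set SR : Finset (ModuleCat.{0} Λ) :=
    indF.filter (fun x => ∃ S ∈ simples, Nonempty (x ≅ S)) with hSR
  have hABsub : A ∩ B ⊆ SR := by
    intro x hx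
    obtain ⟨hxA, hxB⟩ := Finset.mem_inter.mp hx
    obtain ⟨i, -, rfl⟩ := Finset.mem_image.mp hxA
    obtain ⟨j, -, hj⟩ := Finset.mem_image.mp hxB
    obtain ⟨ei⟩ := hriso i
    obtain ⟨ej⟩ := hrNiso j
    have w : M i ≅ N j := ei.trans ((hj ▸ ej).symm)
    obtain ⟨S, hS, ⟨u⟩⟩ := key i j w
    refine Finset.mem_filter.mpr ⟨hfin.mem_toFinset.mpr (hr i), S, hS, ⟨ei.symm.trans u⟩⟩
  have hSRcard : SR.card ≤ n := by
    have hsfin : simples.Finite := Set.finite_coe_iff.mp hfinS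
    have hcard2 : hsfin.toFinset.card = n := by
      rw [← Set.ncard_eq_toFinset_card simples hsfin, ← Nat.card_coe_set_eq, hcard]
    rw [← hcard2]
    have hchoice : ∀ x ∈ SR, ∃ S, S ∈ simples ∧ Nonempty (x ≅ S) := by
      intro x hx
      obtain ⟨-, S, hS, hiso⟩ := Finset.mem_filter.mp hx
      exact ⟨S, hS, hiso⟩
    choose σ hσ1 hσ2 using hchoice
    have hSRind : ∀ x ∈ SR, x ∈ ind := fun x hx =>
      hfin.mem_toFinset.mp (Finset.mem_filter.mp hx).1
    classical
    apply Finset.card_le_card_of_injOn (fun x => if hx : x ∈ SR then σ x hx else x)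
    · intro x hx
      simp only [Finset.mem_coe] at hx
      beta_reduce
      rw [dif_pos hx]
      exact hsfin.mem_toFinset.mpr (hσ1 x hx)
    · intro x hx x' hx' hxx
      simp only [Finset.mem_coe] at hx hx'
      simp only [dif_pos hx, dif_pos hx'] at hxx
      obtain ⟨u1⟩ := hσ2 x hx
      obtain ⟨u2⟩ := hσ2 x' hx'
      exact hindinj x (hSRind x hx) x' (hSRind x' hx') ⟨u1.trans (hxx ▸ u2.symm)⟩
  have hcount := Finset.card_union_add_card_inter A B
  have hUcard : (A ∪ B).card ≤ indF.card := Finset.card_le_card (Finset.union_subset hAsub hBsub)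
  have hIcard : (A ∩ B).card ≤ n := le_trans (Finset.card_le_card hABsub) hSRcard
  have hindcard : Nat.card ind = indF.card := by
    rw [Nat.card_coe_set_eq, Set.ncard_eq_toFinset_card ind hfin]
  omega
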